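/- In the data center model, suppose that for all policies d and all j = 1,...,m, G^{(d)}(n,j) + c ≤ 0. Then for each fixed j, the long-run average profit η^{d} is (weakly) decreasing in the decision element d_{n,j} on {0,1,...,j}: if d' agrees with d except d'_{n,j} > d_{n,j} with both in {0,...,j}, then η^{d'} ≤ η^{d}. -/

import Mathlib

open Finset

/-- Death rate of the data-center birth-death chain at state index `k`
(states `0..n` are `(k,0)`; states `n+1..n+m` are `(n, k-n)`). -/
noncomputable def dcDeath (n : ℕ) (μ1 μ2 : ℝ) (d : ℕ → ℕ) (k : ℕ) : ℝ :=
  if k ≤ n then (k : ℝ) * μ1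
  else (n : ℝ) * μ1 + (min (d (k - n)) (k - n) : ℝ) * μ2

/-- Policy-dependent generator of the data-center birth-death chain. -/
noncomputable def dcGen (n m : ℕ) (lam μ1 μ2 : ℝ) (d : ℕ → ℕ) (k l : ℕ) : ℝ :=
  if l = k + 1 then lam
  else if l + 1 = k then dcDeath n μ1 μ2 d k
  else if l = k then -((if k < n + m then lam else 0) + dcDeath n μ1 μ2 d k)
  else 0

/-- `π` is a stationary probability vector for the policy-`d` chain. -/
def dcStationary (n m : ℕ) (lam μ1 μ2 : ℝ) (d : ℕ → ℕ) (π : ℕ → ℝ) : Prop :=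
  (∀ l ∈ Finset.range (n + m + 1),
    ∑ k ∈ Finset.range (n + m + 1), π k * dcGen n m lam μ1 μ2 d k l = 0) ∧
  (∑ k ∈ Finset.range (n + m + 1), π k = 1) ∧
  (∀ k ∈ Finset.range (n + m + 1), 0 ≤ π k)

/-- Reward (profit rate) function of the data center at state index `k`. -/
noncomputable def dcReward (n m : ℕ) (lam μ1 μ2 R P1W P2W P2S C1 C21 C22 C3 C4 : ℝ)
    (d : ℕ → ℕ) (k : ℕ) : ℝ :=
  if k ≤ n then
    R * ((k : ℝ) * μ1) - ((n : ℝ) * P1W + (m : ℝ) * P2S) * C1 - (k : ℝ) * C21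
  else
    R * ((n : ℝ) * μ1 + (min (k - n) (d (k - n)) : ℝ) * μ2)
      - ((n : ℝ) * P1W + (d (k - n) : ℝ) * P2W + ((m : ℝ) - (d (k - n) : ℝ)) * P2S) * C1
      - ((n : ℝ) * C21 + ((k - n : ℕ) : ℝ) * C22)
      - (n : ℝ) * μ1 * C3
      - (if k - n = m then lam * C4 else 0)

/-- `g` solves the Poisson equation `B^{(d)} g = η e - f` for the policy-`d` chain. -/
def dcPoisson (n m : ℕ) (lam μ1 μ2 : ℝ) (d : ℕ → ℕ) (f : ℕ → ℝ) (η : ℝ)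
    (g : ℕ → ℝ) : Prop :=
  ∀ k ∈ Finset.range (n + m + 1),
    ∑ l ∈ Finset.range (n + m + 1), dcGen n m lam μ1 μ2 d k l * g l = η - f k


/-- Performance difference formula: `η' − η = Σ_k π'(k)[(f'−f)(k) + Σ_l (B'−B)(k,l) g(l)]`. -/
lemma perf_diff (N : ℕ) (pi' f f' gg : ℕ → ℝ) (B B' : ℕ → ℕ → ℝ) (ed ed' : ℝ)
    (hst1 : ∀ l ∈ Finset.range N, ∑ k ∈ Finset.range N, pi' k * B' k l = 0)
    (hst2 : ∑ k ∈ Finset.range N, pi' k = 1)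
    (hpo : ∀ k ∈ Finset.range N, ∑ l ∈ Finset.range N, B k l * gg l = ed - f k)
    (he' : ed' = ∑ k ∈ Finset.range N, pi' k * f' k) :
    ed' - ed = ∑ k ∈ Finset.range N,
      pi' k * ((f' k - f k) + ∑ l ∈ Finset.range N, (B' k l - B k l) * gg l) := by
  have e1 : ∀ k ∈ Finset.range N,
      pi' k * ((f' k - f k) + ∑ l ∈ Finset.range N, (B' k l - B k l) * gg l)
      = (pi' k * f' k - pi' k * f k)
        + (∑ l ∈ Finset.range N, pi' k * (B' k l * gg l)
           - ∑ l ∈ Finset.range N, pi' k * (B k l * gg l)) := by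
    intro k _
    rw [mul_add, ← Finset.sum_sub_distrib, Finset.mul_sum, mul_sub]
    congr 1
    exact Finset.sum_congr rfl fun l _ => by ring
  rw [Finset.sum_congr rfl e1, Finset.sum_add_distrib, Finset.sum_sub_distrib,
    Finset.sum_sub_distrib]
  have eB' : ∑ k ∈ Finset.range N, ∑ l ∈ Finset.range N, pi' k * (B' k l * gg l) = 0 := by
    rw [Finset.sum_comm]
    apply Finset.sum_eq_zero
    intro l hl
    have h2 : ∀ k ∈ Finset.range N, pi' k * (B' k l * gg l) = (pi' k * B' k l) * gg l :=
      fun k _ => by ring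
    rw [Finset.sum_congr rfl h2, ← Finset.sum_mul, hst1 l hl, zero_mul]
  have eB : ∑ k ∈ Finset.range N, ∑ l ∈ Finset.range N, pi' k * (B k l * gg l)
      = ed - ∑ k ∈ Finset.range N, pi' k * f k := by
    have h2 : ∀ k ∈ Finset.range N,
        ∑ l ∈ Finset.range N, pi' k * (B k l * gg l) = pi' k * ed - pi' k * f k := by
      intro k hk
      rw [← Finset.mul_sum, hpo k hk]; ring
    rw [Finset.sum_congr rfl h2, Finset.sum_sub_distrib, ← Finset.sum_mul, hst2, one_mul]
  rw [eB', eB, he']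
  ring

/-- if `G^{(d)}(n,j) + c ≤ 0` for all policies `d` and all
`j = 1,...,m`, then the long-run average profit is weakly decreasing in each
decision element `d_{n,j}` on `{0,...,j}`. -/
theorem stmt9 (n m : ℕ) (hn : 1 ≤ n) (hm : 1 ≤ m)
    (lam μ1 μ2 R P1W P2W P2S C1 C21 C22 C3 C4 : ℝ)
    (hlam : 0 < lam) (hμ1 : 0 < μ1) (hμ2 : 0 < μ2)
    (hP2S : 0 < P2S) (hP : P2S < P2W) (hC1 : 0 < C1)
    (π : (ℕ → ℕ) → ℕ → ℝ)
    (hπ : ∀ d : ℕ → ℕ, (∀ j, d j ≤ m) → dcStationary n m lam μ1 μ2 d (π d))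
    (η : (ℕ → ℕ) → ℝ)
    (hη : ∀ d : ℕ → ℕ, η d = ∑ k ∈ Finset.range (n + m + 1),
      π d k * dcReward n m lam μ1 μ2 R P1W P2W P2S C1 C21 C22 C3 C4 d k)
    (g : (ℕ → ℕ) → ℕ → ℝ)
    (hg : ∀ d : ℕ → ℕ, (∀ j, d j ≤ m) → dcPoisson n m lam μ1 μ2 d
      (dcReward n m lam μ1 μ2 R P1W P2W P2S C1 C21 C22 C3 C4 d) (η d) (g d))
    (c : ℝ) (hc : c = R - (P2W - P2S) * C1 / μ2)
    (hsign : ∀ d : ℕ → ℕ, (∀ j, d j ≤ m) → ∀ j, 1 ≤ j → j ≤ m →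
      (g d (n + j - 1) - g d (n + j)) + c ≤ 0) :
    ∀ (j0 : ℕ), 1 ≤ j0 → j0 ≤ m →
    ∀ d d' : ℕ → ℕ, (∀ j, d j ≤ m) → (∀ j, d' j ≤ m) →
      (∀ j, j ≠ j0 → d j = d' j) →
      d j0 < d' j0 → d' j0 ≤ j0 →
      η d' ≤ η d := by
  intro j0 hj1 hj2 d d' hd hd' hagree hlt hle
  have hdle : d j0 ≤ j0 := by omega
  obtain ⟨hst1, hst2, hst3⟩ := hπ d' hd'
  have hpo : ∀ k ∈ Finset.range (n + m + 1),
      ∑ l ∈ Finset.range (n + m + 1), dcGen n m lam μ1 μ2 d k l * g d l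
        = η d - dcReward n m lam μ1 μ2 R P1W P2W P2S C1 C21 C22 C3 C4 d k := hg d hd
  have key := perf_diff (n + m + 1) (π d')
      (dcReward n m lam μ1 μ2 R P1W P2W P2S C1 C21 C22 C3 C4 d)
      (dcReward n m lam μ1 μ2 R P1W P2W P2S C1 C21 C22 C3 C4 d')
      (g d) (dcGen n m lam μ1 μ2 d) (dcGen n m lam μ1 μ2 d') (η d) (η d')
      hst1 hst2 hpo (hη d')
  have hnk : ¬ (n + j0 ≤ n) := by omega
  have hμ2ne : μ2 ≠ 0 := ne_of_gt hμ2
  have hterm : ∀ k ∈ Finset.range (n + m + 1),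
      π d' k * ((dcReward n m lam μ1 μ2 R P1W P2W P2S C1 C21 C22 C3 C4 d' k
          - dcReward n m lam μ1 μ2 R P1W P2W P2S C1 C21 C22 C3 C4 d k)
        + ∑ l ∈ Finset.range (n + m + 1),
            (dcGen n m lam μ1 μ2 d' k l - dcGen n m lam μ1 μ2 d k l) * g d l) ≤ 0 := by
    intro k hk
    by_cases hkk : k = n + j0
    · subst hkk
      have hfd : dcReward n m lam μ1 μ2 R P1W P2W P2S C1 C21 C22 C3 C4 d' (n + j0)
          - dcReward n m lam μ1 μ2 R P1W P2W P2S C1 C21 C22 C3 C4 d (n + j0)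
          = ((d' j0 : ℝ) - (d j0 : ℝ)) * μ2 * c := by
        have ecast : ((↑(n + j0) : ℝ) - ↑n) = (j0 : ℝ) := by push_cast; ring
        have emin1 : ((↑(n + j0) : ℝ) - ↑n) ⊓ (↑(d' j0) : ℝ) = (↑(d' j0) : ℝ) := by
          rw [ecast]; exact min_eq_right (Nat.cast_le.mpr hle)
        have emin2 : ((↑(n + j0) : ℝ) - ↑n) ⊓ (↑(d j0) : ℝ) = (↑(d j0) : ℝ) := by
          rw [ecast]; exact min_eq_right (Nat.cast_le.mpr hdle)
        unfold dcReward
        rw [if_neg hnk, if_neg hnk]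
        simp only [Nat.add_sub_cancel_left]
        rw [emin1, emin2, hc]
        field_simp
        ring
      have hdd : dcDeath n μ1 μ2 d' (n + j0) - dcDeath n μ1 μ2 d (n + j0)
          = ((d' j0 : ℝ) - (d j0 : ℝ)) * μ2 := by
        have ecast : ((↑(n + j0) : ℝ) - ↑n) = (j0 : ℝ) := by push_cast; ring
        have emin3 : (↑(d' j0) : ℝ) ⊓ ((↑(n + j0) : ℝ) - ↑n) = (↑(d' j0) : ℝ) := by
          rw [ecast]; exact min_eq_left (Nat.cast_le.mpr hle)
        have emin4 : (↑(d j0) : ℝ) ⊓ ((↑(n + j0) : ℝ) - ↑n) = (↑(d j0) : ℝ) := by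
          rw [ecast]; exact min_eq_left (Nat.cast_le.mpr hdle)
        unfold dcDeath
        rw [if_neg hnk, if_neg hnk]
        simp only [Nat.add_sub_cancel_left]
        rw [emin3, emin4]
        ring
      have hpt : ∀ l ∈ Finset.range (n + m + 1),
          (dcGen n m lam μ1 μ2 d' (n + j0) l - dcGen n m lam μ1 μ2 d (n + j0) l) * g d l
          = (if l = n + j0 - 1 then ((d' j0 : ℝ) - (d j0 : ℝ)) * μ2 * g d l else 0)
            + (if l = n + j0 then -(((d' j0 : ℝ) - (d j0 : ℝ)) * μ2) * g d l else 0) := by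
        intro l _
        unfold dcGen
        split_ifs
        all_goals try (exfalso; omega)
        all_goals try ring
        all_goals try linear_combination g d l * hdd
        all_goals try linear_combination (-(g d l)) * hdd
      have hmem1 : n + j0 - 1 ∈ Finset.range (n + m + 1) := Finset.mem_range.mpr (by omega)
      have hmem0 : n + j0 ∈ Finset.range (n + m + 1) := Finset.mem_range.mpr (by omega)
      have hBd : ∑ l ∈ Finset.range (n + m + 1),
          (dcGen n m lam μ1 μ2 d' (n + j0) l - dcGen n m lam μ1 μ2 d (n + j0) l) * g d l
          = ((d' j0 : ℝ) - (d j0 : ℝ)) * μ2 * g d (n + j0 - 1)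
            + -(((d' j0 : ℝ) - (d j0 : ℝ)) * μ2) * g d (n + j0) := by
        rw [Finset.sum_congr rfl hpt, Finset.sum_add_distrib, Finset.sum_ite_eq',
          Finset.sum_ite_eq', if_pos hmem1, if_pos hmem0]
      rw [hfd, hBd]
      have hπ0 : 0 ≤ π d' (n + j0) := hst3 _ hk
      have hΔ0 : (0 : ℝ) ≤ ((d' j0 : ℝ) - (d j0 : ℝ)) * μ2 := by
        have : (d j0 : ℝ) ≤ (d' j0 : ℝ) := Nat.cast_le.mpr hlt.le
        exact mul_nonneg (by linarith) hμ2.le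
      have hs := hsign d hd j0 hj1 hj2
      have hrw : ((d' j0 : ℝ) - (d j0 : ℝ)) * μ2 * c
          + (((d' j0 : ℝ) - (d j0 : ℝ)) * μ2 * g d (n + j0 - 1)
            + -(((d' j0 : ℝ) - (d j0 : ℝ)) * μ2) * g d (n + j0))
          = (((d' j0 : ℝ) - (d j0 : ℝ)) * μ2) * ((g d (n + j0 - 1) - g d (n + j0)) + c) := by
        ring
      rw [hrw]
      exact mul_nonpos_of_nonneg_of_nonpos hπ0 (mul_nonpos_of_nonneg_of_nonpos hΔ0 hs)
    · have hf0 : dcReward n m lam μ1 μ2 R P1W P2W P2S C1 C21 C22 C3 C4 d' k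
          - dcReward n m lam μ1 μ2 R P1W P2W P2S C1 C21 C22 C3 C4 d k = 0 := by
        unfold dcReward
        by_cases h : k ≤ n
        · rw [if_pos h, if_pos h]; ring
        · have hne : k - n ≠ j0 := by omega
          rw [if_neg h, if_neg h, ← hagree _ hne]
          ring
      have hB0 : ∀ l, dcGen n m lam μ1 μ2 d' k l - dcGen n m lam μ1 μ2 d k l = 0 := by
        intro l
        have hdeq : dcDeath n μ1 μ2 d' k = dcDeath n μ1 μ2 d k := by
          unfold dcDeath
          by_cases h : k ≤ n
          · rw [if_pos h, if_pos h]
          · have hne : k - n ≠ j0 := by omega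
            rw [if_neg h, if_neg h, ← hagree _ hne]
        unfold dcGen
        rw [hdeq]
        exact sub_self _
      rw [hf0, Finset.sum_eq_zero (fun l _ => by rw [hB0 l, zero_mul]), add_zero, mul_zero]
  have hfin : η d' - η d ≤ 0 := by
    rw [key]; exact Finset.sum_nonpos hterm
  linarith
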